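/- Conversely, given a finite array (ρ_{i,j}) of nonnegative integers, 1 ≤ i ≤ k, 1 ≤ j, with positive entries forming a left-justified shape β₁ > β₂ > ... > β_k > 0 (row i has exactly βᵢ positive entries), strictly decreasing along rows (ρ_{i,j} > ρ_{i,j+1} for j < βᵢ) and strictly decreasing down columns (ρ_{i,j} > ρ_{i+1,j} for j ≤ β_{i+1}), the set N = { x₁ᵃx₂^{j-1}x₃^{i-1} : 1 ≤ i ≤ k, 1 ≤ j ≤ βᵢ, 0 ≤ a < ρ_{i,j} } is an order ideal, and the monomial ideal J of monomials outside N is stable. -/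
import Mathlib


def IsStable {n : ℕ} (I : Set (Fin n → ℕ)) : Prop :=
  ∀ τ ∈ I, ∀ m j : Fin n, τ m ≠ 0 → (∀ l, l < m → τ l = 0) → m < j →
    τ - Pi.single m 1 + Pi.single j 1 ∈ I

def mon3 (a b c : ℕ) : Fin 3 → ℕ := ![a, b, c]

lemma rho_row_le {k : ℕ} (β : Fin k → ℕ) (ρ : Fin k → ℕ → ℕ)
    (hrow : ∀ i, ∀ j, j + 1 < β i → ρ i (j + 1) < ρ i j)
    (i : Fin k) : ∀ d j, j + d < β i → ρ i (j + d) ≤ ρ i j := by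
  intro d
  induction d with
  | zero => intro j _; simp
  | succ d ih =>
    intro j h
    have h1 : j + d + 1 < β i := by omega
    have h2 := hrow i (j + d) h1
    have h3 := ih j (by omega)
    have he : j + (d + 1) = j + d + 1 := by omega
    rw [he]
    omega

lemma rho_col_le {k : ℕ} (β : Fin k → ℕ) (hβ : StrictAnti β) (ρ : Fin k → ℕ → ℕ)
    (hcol : ∀ (i : Fin k) (h : (i : ℕ) + 1 < k), ∀ j, j < β ⟨(i : ℕ) + 1, h⟩ →
      ρ ⟨(i : ℕ) + 1, h⟩ j < ρ i j)
    (j : ℕ) : ∀ d c (h : c + d < k),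
      j < β ⟨c + d, h⟩ → ρ ⟨c + d, h⟩ j ≤ ρ ⟨c, by omega⟩ j := by
  intro d
  induction d with
  | zero => intro c h _; rfl
  | succ d ih =>
    intro c h hj
    have h1 : c + d < k := by omega
    have h1' : c + d + 1 < k := by omega
    have heq : (⟨c + (d + 1), h⟩ : Fin k) = ⟨c + d + 1, h1'⟩ := by
      ext; simp; omega
    rw [heq] at hj ⊢
    have h2 := hcol ⟨c + d, h1⟩ h1' j hj
    simp only [Fin.val_mk] at h2
    have hlt : (⟨c + d, h1⟩ : Fin k) < ⟨c + d + 1, h1'⟩ := by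
      simp [Fin.lt_def]
    have hβlt : β ⟨c + d + 1, h1'⟩ < β ⟨c + d, h1⟩ := hβ hlt
    have h3 := ih c h1 (by omega)
    omega

theorem strict_plane_partition_gives_stable_ideal
    (k : ℕ) (β : Fin k → ℕ) (hβpos : ∀ i, 0 < β i) (hβ : StrictAnti β)
    (ρ : Fin k → ℕ → ℕ)
    (hpos : ∀ i, ∀ j, j < β i → 0 < ρ i j)
    (hzero : ∀ i, ∀ j, β i ≤ j → ρ i j = 0)
    (hrow : ∀ i, ∀ j, j + 1 < β i → ρ i (j + 1) < ρ i j)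
    (hcol : ∀ (i : Fin k) (h : (i : ℕ) + 1 < k), ∀ j, j < β ⟨(i : ℕ) + 1, h⟩ →
      ρ ⟨(i : ℕ) + 1, h⟩ j < ρ i j)
    (N : Set (Fin 3 → ℕ))
    (hN : N = {τ : Fin 3 → ℕ | ∃ (i : Fin k) (j a : ℕ),
      j < β i ∧ a < ρ i j ∧ τ = mon3 a j (i : ℕ)}) :
    (∀ τ ∈ N, ∀ σ : Fin 3 → ℕ, σ ≤ τ → σ ∈ N) ∧
    IsStable {τ : Fin 3 → ℕ | τ ∉ N} := by
  subst hN
  have mem_iff : ∀ τ : Fin 3 → ℕ,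
      τ ∈ {τ : Fin 3 → ℕ | ∃ (i : Fin k) (j a : ℕ),
        j < β i ∧ a < ρ i j ∧ τ = mon3 a j (i : ℕ)} ↔
      ∃ (hc : τ 2 < k), τ 1 < β ⟨τ 2, hc⟩ ∧ τ 0 < ρ ⟨τ 2, hc⟩ (τ 1) := by
    intro τ
    constructor
    · rintro ⟨i, j, a, hj, ha, rfl⟩
      have h0 : mon3 a j (i : ℕ) 0 = a := rfl
      have h1 : mon3 a j (i : ℕ) 1 = j := rfl
      have h2 : mon3 a j (i : ℕ) 2 = (i : ℕ) := rfl
      rw [h0, h1, h2]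
      refine ⟨i.isLt, ?_, ?_⟩ <;> simp [Fin.eta] <;> assumption
    · rintro ⟨hc, h1, h2⟩
      refine ⟨⟨τ 2, hc⟩, τ 1, τ 0, h1, h2, ?_⟩
      funext l
      fin_cases l <;> rfl
  constructor
  · -- order ideal
    intro τ hτ σ hστ
    rw [mem_iff] at hτ ⊢
    obtain ⟨hc, h1, h2⟩ := hτ
    have e0 : σ 0 ≤ τ 0 := hστ 0
    have e1 : σ 1 ≤ τ 1 := hστ 1
    have e2 : σ 2 ≤ τ 2 := hστ 2
    have hc' : σ 2 < k := by omega
    refine ⟨hc', ?_, ?_⟩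
    · have : β ⟨τ 2, hc⟩ ≤ β ⟨σ 2, hc'⟩ := hβ.antitone (by simp [Fin.le_def]; omega)
      omega
    · have hr : ρ ⟨τ 2, hc⟩ (τ 1) ≤ ρ ⟨τ 2, hc⟩ (σ 1) := by
        have h := rho_row_le β ρ hrow ⟨τ 2, hc⟩ (τ 1 - σ 1) (σ 1) (by omega)
        have heq : σ 1 + (τ 1 - σ 1) = τ 1 := by omega
        rwa [heq] at h
      have hc2 : ρ ⟨τ 2, hc⟩ (σ 1) ≤ ρ ⟨σ 2, hc'⟩ (σ 1) := by
        have heq : σ 2 + (τ 2 - σ 2) = τ 2 := by omega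
        have h := rho_col_le β hβ ρ hcol (σ 1) (τ 2 - σ 2) (σ 2) (by omega)
          (by simp only [heq]; omega)
        simp only [heq] at h
        exact h
      omega
  · -- stability
    intro τ hτ m j hm h0 hmj
    simp only [Set.mem_setOf_eq] at hτ ⊢
    intro hσ
    apply hτ
    have m0 : m = 0 ∨ m = 1 ∨ m = 2 := by fin_cases m <;> simp
    have j0 : j = 0 ∨ j = 1 ∨ j = 2 := by fin_cases j <;> simp
    rcases m0 with rfl | rfl | rfl <;> rcases j0 with rfl | rfl | rfl <;>
        simp only [Fin.lt_def, Fin.val_zero, Fin.val_one, Fin.val_two] at hmj <;>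
        try omega
    · -- m = 0, j = 1
      have hs : (τ - Pi.single (0 : Fin 3) 1 + Pi.single (1 : Fin 3) 1 : Fin 3 → ℕ)
          = mon3 (τ 0 - 1) (τ 1 + 1) (τ 2) := by
        funext l
        fin_cases l <;> simp [mon3, Pi.sub_apply, Pi.add_apply, Pi.single_apply]
      rw [hs] at hσ
      obtain ⟨i, jj, a, hj, ha, heq⟩ := hσ
      have e0 : τ 0 - 1 = a := congrFun heq 0
      have e1 : τ 1 + 1 = jj := congrFun heq 1
      have e2 : τ 2 = (i : ℕ) := congrFun heq 2
      have hik := i.isLt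
      have hc : τ 2 < k := by omega
      have hieq : (⟨τ 2, hc⟩ : Fin k) = i := by ext; simpa using e2
      have hm' : τ 0 ≠ 0 := hm
      refine (mem_iff τ).mpr ⟨hc, ?_, ?_⟩ <;> rw [hieq]
      · omega
      · have hstep := hrow i (τ 1) (by omega)
        rw [← e1] at ha
        omega
    · -- m = 0, j = 2
      have hs : (τ - Pi.single (0 : Fin 3) 1 + Pi.single (2 : Fin 3) 1 : Fin 3 → ℕ)
          = mon3 (τ 0 - 1) (τ 1) (τ 2 + 1) := by
        funext l
        fin_cases l <;> simp [mon3, Pi.sub_apply, Pi.add_apply, Pi.single_apply]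
      rw [hs] at hσ
      obtain ⟨i, jj, a, hj, ha, heq⟩ := hσ
      have e0 : τ 0 - 1 = a := congrFun heq 0
      have e1 : τ 1 = jj := congrFun heq 1
      have e2 : τ 2 + 1 = (i : ℕ) := congrFun heq 2
      have hik := i.isLt
      have hck : τ 2 < k := by omega
      have h' : (⟨τ 2, hck⟩ : Fin k).val + 1 < k := by simp; omega
      have hieq2 : (⟨(⟨τ 2, hck⟩ : Fin k).val + 1, h'⟩ : Fin k) = i := by
        ext; simp; omega
      have hblt : β i < β ⟨τ 2, hck⟩ := hβ (by simp [Fin.lt_def]; omega)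
      have hstep := hcol ⟨τ 2, hck⟩ h' (τ 1) (by rw [hieq2]; omega)
      rw [hieq2] at hstep
      rw [← e1] at ha
      have hm' : τ 0 ≠ 0 := hm
      exact (mem_iff τ).mpr ⟨hck, by omega, by omega⟩
    · -- m = 1, j = 2
      have hs : (τ - Pi.single (1 : Fin 3) 1 + Pi.single (2 : Fin 3) 1 : Fin 3 → ℕ)
          = mon3 (τ 0) (τ 1 - 1) (τ 2 + 1) := by
        funext l
        fin_cases l <;> simp [mon3, Pi.sub_apply, Pi.add_apply, Pi.single_apply]
      rw [hs] at hσ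
      obtain ⟨i, jj, a, hj, ha, heq⟩ := hσ
      have e1 : τ 1 - 1 = jj := congrFun heq 1
      have e2 : τ 2 + 1 = (i : ℕ) := congrFun heq 2
      have hik := i.isLt
      have hck : τ 2 < k := by omega
      have hblt : β i < β ⟨τ 2, hck⟩ := hβ (by simp [Fin.lt_def]; omega)
      have hm' : τ 1 ≠ 0 := hm
      have hτ0 : τ 0 = 0 := h0 0 (by decide)
      have hb : τ 1 < β ⟨τ 2, hck⟩ := by omega
      exact (mem_iff τ).mpr ⟨hck, hb, by rw [hτ0]; exact hpos _ _ hb⟩
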